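/- arXiv:2410.03849 — 2 statements merged into one kernel-verified Lean document; each statement's English description precedes it below -/
import Mathlib

section
/- For every nonempty class F of sequential experts and every horizon T ≥ 1, the dual value equals the worst-case log contextual Shtarkov sum: V_T(F) = sup_x log S_T(F | x), the supremum being over all context trees x of depth T (equality in the extended reals). -/
open scoped BigOperators

/-- The probability simplex on a finite label set `Y`. -/
abbrev Simplex (Y : Type*) [Fintype Y] :=
  {p : Y → ℝ // (∀ y, 0 ≤ p y) ∧ ∑ y, p y = 1}

/-- A sequential expert: given contexts `x₁,…,x_t` (a list of length `t`) and past labels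
`y₁,…,y_{t-1}` (a list of length `t-1`), it predicts a distribution over labels. -/
abbrev Expert (X Y : Type*) [Fintype Y] := List X → List Y → Simplex Y

/-- `-log x` as an extended real, with `-log 0 = ⊤` (and junk value `⊤` for `x < 0`). -/
noncomputable def negLog (x : ℝ) : EReal :=
  if x ≤ 0 then ⊤ else ((-Real.log x : ℝ) : EReal)

/-- `log x` as an extended real, with `log 0 = ⊥` (and junk value `⊥` for `x < 0`). -/
noncomputable def elog (x : ℝ) : EReal :=
  if x ≤ 0 then ⊥ else ((Real.log x : ℝ) : EReal)

/-- The logarithmic loss `ℓ(p, y) = -log p(y) ∈ [0, ∞]`. -/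
noncomputable def logloss {Y : Type*} [Fintype Y] (p : Simplex Y) (y : Y) : EReal :=
  negLog (p.1 y)

/-- Likelihood of expert `f` on a context sequence `xs` and a label sequence `ys`
of the same length: `L(f; y_{1:d} | x_{1:d}) = ∏_{t=1}^d f(x_{1:t}, y_{1:t-1})(y_t)`. -/
noncomputable def likelihood {X Y : Type*} [Fintype Y] [Inhabited Y]
    (f : Expert X Y) (xs : List X) (ys : List Y) : ℝ :=
  ∏ t ∈ Finset.range ys.length, (f (xs.take (t + 1)) (ys.take t)).1 (ys.getD t default)

/-- Cumulative log loss of expert `f` on `xs`, `ys`: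
`Σ_{t=1}^d ℓ(f(x_{1:t}, y_{1:t-1}), y_t)`. -/
noncomputable def cumLoss {X Y : Type*} [Fintype Y] [Inhabited Y]
    (f : Expert X Y) (xs : List X) (ys : List Y) : EReal :=
  ∑ t ∈ Finset.range ys.length, logloss (f (xs.take (t + 1)) (ys.take t)) (ys.getD t default)

/-- A context tree of depth `T` is modelled as a map `χ : List Y → X` (only its values on
lists of length `< T` matter): `x_t(y) = χ (y_{1:t-1})`.  `treePath χ ys` is the context
sequence `x(y) = (x_1, x_2(y_1), …)` obtained by tracing the tree along the path `ys`. -/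
def treePath {X Y : Type*} (χ : List Y → X) (ys : List Y) : List X :=
  (List.range ys.length).map fun t => χ (ys.take t)

/-- The contextual Shtarkov sum of `F` on a context tree `χ` of depth `r`, with prefix
`xs ∈ X^t`, `ys ∈ Y^t`:
`S_T(F, χ | x_{1:t}, y_{1:t}) = Σ_{y ∈ Y^r} sup_{f ∈ F} L(f; (y_{1:t}, y) | (x_{1:t}, χ(y)))`. -/
noncomputable def shtarkovPrefix {X Y : Type*} [Fintype Y] [Inhabited Y]
    (F : Set (Expert X Y)) (r : ℕ) (χ : List Y → X) (xs : List X) (ys : List Y) : ℝ :=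
  ∑ y : Fin r → Y, ⨆ f : F,
    likelihood (f : Expert X Y) (xs ++ treePath χ (List.ofFn y)) (ys ++ List.ofFn y)

/-- The contextual Shtarkov sum `S_T(F | χ) = Σ_{y ∈ Y^T} sup_{f ∈ F} L(f; y | χ(y))`. -/
noncomputable def shtarkov {X Y : Type*} [Fintype Y] [Inhabited Y]
    (F : Set (Expert X Y)) (T : ℕ) (χ : List Y → X) : ℝ :=
  shtarkovPrefix F T χ [] []

/-- The extensive-form game value with `r` rounds to go, given past contexts `xs`, past
labels `ys`, and accumulated learner loss `acc`:
`sup_{x} inf_{p̂} sup_{y} ⋯ [ acc + Σ ℓ(p̂_s, y_s) − inf_{f ∈ F} Σ_{s=1}^T ℓ(f, y_s) ]`. -/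
noncomputable def valToGo {X Y : Type*} [Fintype Y] [Inhabited Y]
    (F : Set (Expert X Y)) : ℕ → List X → List Y → EReal → EReal
  | 0, xs, ys, acc => acc - ⨅ f : F, cumLoss (f : Expert X Y) xs ys
  | r + 1, xs, ys, acc =>
      ⨆ x : X, ⨅ p : Simplex Y, ⨆ y : Y,
        valToGo F r (xs ++ [x]) (ys ++ [y]) (acc + logloss p y)

/-- The minimax regret
`R_T(F) = sup_{x_1} inf_{p̂_1} sup_{y_1} ⋯ sup_{x_T} inf_{p̂_T} sup_{y_T} R_T(F; p̂, x, y)`. -/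
noncomputable def minimaxRegret {X Y : Type*} [Fintype Y] [Inhabited Y]
    (F : Set (Expert X Y)) (T : ℕ) : EReal :=
  valToGo F T [] [] 0

/-- Nested conditional expectation over a probabilistic tree `π`, for `r` remaining rounds:
`E_{y_1 ∼ π([])} E_{y_2 ∼ π(y_{1:1})} ⋯ [g(y_{1:r})]`. -/
noncomputable def expTree {Y : Type*} [Fintype Y] (π : List Y → Simplex Y)
    (g : List Y → EReal) : ℕ → List Y → EReal
  | 0, pre => g pre
  | r + 1, pre => ∑ y : Y, ((π pre).1 y : EReal) * expTree π g r (pre ++ [y])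

/-- The dual (max-min) value-to-go `W(F, x_{1:t}, y_{1:t})`: the supremum over context trees
`χ` and probabilistic trees `π` of depth `r = T - t` of
`E_{y∼π}[ Σ_{s=t+1}^T ℓ(π_s(y), y_s) − inf_{f ∈ F} Σ_{s=1}^T ℓ(f, y_s) ]`. -/
noncomputable def dualValToGo {X Y : Type*} [Fintype Y] [Inhabited Y]
    (F : Set (Expert X Y)) (r : ℕ) (xs : List X) (ys : List Y) : EReal :=
  ⨆ χ : List Y → X, ⨆ π : List Y → Simplex Y,
    expTree π (fun suf =>
      (∑ s ∈ Finset.range r, logloss (π (suf.take s)) (suf.getD s default)) -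
        ⨅ f : F, cumLoss (f : Expert X Y) (xs ++ treePath χ suf) (ys ++ suf)) r []

/-- The dual (max-min) value `V_T(F)`. -/
noncomputable def dualValue {X Y : Type*} [Fintype Y] [Inhabited Y]
    (F : Set (Expert X Y)) (T : ℕ) : EReal :=
  dualValToGo F T [] []

lemma negLog_ne_bot (x : ℝ) : negLog x ≠ ⊥ := by
  unfold negLog; split <;> simp

lemma negLog_of_pos {x : ℝ} (h : 0 < x) : negLog x = ((-Real.log x : ℝ) : EReal) := by
  simp [negLog, not_le.2 h]

lemma negLog_of_nonpos {x : ℝ} (h : x ≤ 0) : negLog x = ⊤ := by simp [negLog, h]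

lemma negLog_mul {a b : ℝ} (ha : 0 ≤ a) (hb : 0 ≤ b) :
    negLog (a * b) = negLog a + negLog b := by
  rcases eq_or_lt_of_le ha with rfl | ha'
  · rw [zero_mul, negLog_of_nonpos le_rfl,
      EReal.top_add_of_ne_bot (negLog_ne_bot b)]
  rcases eq_or_lt_of_le hb with rfl | hb'
  · rw [mul_zero, negLog_of_nonpos le_rfl,
      EReal.add_top_of_ne_bot (negLog_ne_bot a)]
  rw [negLog_of_pos (mul_pos ha' hb'), negLog_of_pos ha', negLog_of_pos hb',
    Real.log_mul ha'.ne' hb'.ne', neg_add, EReal.coe_add]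

lemma negLog_prod {ι : Type*} (s : Finset ι) (f : ι → ℝ) (h : ∀ i ∈ s, 0 ≤ f i) :
    negLog (∏ i ∈ s, f i) = ∑ i ∈ s, negLog (f i) := by
  induction s using Finset.cons_induction with
  | empty => simp [negLog_of_pos one_pos]
  | cons a s ha ih =>
    rw [Finset.prod_cons, Finset.sum_cons,
      negLog_mul (h a (Finset.mem_cons_self a s)) (Finset.prod_nonneg fun i hi => h i (Finset.mem_cons_of_mem hi)),
      ih fun i hi => h i (Finset.mem_cons_of_mem hi)]

lemma iInf_negLog {ι : Type*} [Nonempty ι] (g : ι → ℝ) (h0 : ∀ i, 0 ≤ g i)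
    (h1 : ∀ i, g i ≤ 1) : (⨅ i, negLog (g i)) = negLog (⨆ i, g i) := by
  have hbdd : BddAbove (Set.range g) := ⟨1, by rintro _ ⟨i, rfl⟩; exact h1 i⟩
  have hle : ∀ i, g i ≤ ⨆ j, g j := fun i => le_ciSup hbdd i
  refine le_antisymm ?_ (le_iInf fun i => ?_)
  · by_contra hlt
    push_neg at hlt
    rcases lt_or_ge 0 (⨆ j, g j) with hs | hs
    · rw [negLog_of_pos hs] at hlt
      obtain ⟨c, hc1, hc2⟩ := EReal.exists_between_coe_real hlt
      have key : ∀ i, g i < Real.exp (-c) := by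
        intro i
        have hic : (c : EReal) < negLog (g i) := lt_of_lt_of_le hc2 (iInf_le _ i)
        rcases le_or_gt (g i) 0 with h | h
        · exact lt_of_le_of_lt h (Real.exp_pos _)
        · rw [negLog_of_pos h, EReal.coe_lt_coe_iff] at hic
          have : Real.log (g i) < -c := by linarith
          calc g i = Real.exp (Real.log (g i)) := (Real.exp_log h).symm
          _ < Real.exp (-c) := Real.exp_lt_exp.2 this
      have hsle : (⨆ j, g j) ≤ Real.exp (-c) := ciSup_le fun i => (key i).le
      have : Real.log (⨆ j, g j) ≤ -c := by
        calc Real.log (⨆ j, g j) ≤ Real.log (Real.exp (-c)) :=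
          Real.log_le_log (by positivity) hsle
        _ = -c := Real.log_exp _
      rw [EReal.coe_lt_coe_iff] at hc1
      linarith
    · rw [negLog_of_nonpos hs] at hlt
      exact not_top_lt hlt
  · rcases le_or_gt (g i) 0 with h | h
    · rw [negLog_of_nonpos h]; exact le_top
    · rw [negLog_of_pos h, negLog_of_pos (lt_of_lt_of_le h (hle i))]
      exact EReal.coe_le_coe_iff.2 (by
        have := Real.log_le_log h (hle i); linarith)

lemma ereal_coe_sum {ι : Type*} (s : Finset ι) (f : ι → ℝ) :
    ((∑ i ∈ s, f i : ℝ) : EReal) = ∑ i ∈ s, ((f i : ℝ) : EReal) :=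
  map_sum (⟨⟨Real.toEReal, EReal.coe_zero⟩, EReal.coe_add⟩ : ℝ →+ EReal) f s

lemma ereal_coe_mul_add {c : ℝ} (hc : 0 ≤ c) (x y : EReal) :
    (c : EReal) * (x + y) = (c : EReal) * x + (c : EReal) * y := by
  rcases eq_or_lt_of_le hc with rfl | hc'
  · simp [EReal.zero_mul]
  have hc0 : (0 : EReal) < (c : EReal) := EReal.coe_pos.2 hc'
  induction x with
  | bot => rw [EReal.bot_add, EReal.mul_bot_of_pos hc0, EReal.bot_add]
  | top =>
    induction y with
    | bot => rw [EReal.add_bot, EReal.mul_bot_of_pos hc0, EReal.add_bot]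
    | top => rw [EReal.top_add_top, EReal.mul_top_of_pos hc0, EReal.top_add_top]
    | coe y =>
      rw [EReal.top_add_of_ne_bot (EReal.coe_ne_bot y), EReal.mul_top_of_pos hc0,
        ← EReal.coe_mul, EReal.top_add_of_ne_bot (EReal.coe_ne_bot _)]
  | coe x =>
    induction y with
    | bot => rw [EReal.add_bot, EReal.mul_bot_of_pos hc0, EReal.add_bot]
    | top =>
      rw [EReal.add_top_of_ne_bot (EReal.coe_ne_bot x), EReal.mul_top_of_pos hc0,
        ← EReal.coe_mul, EReal.add_top_of_ne_bot (EReal.coe_ne_bot _)]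
    | coe y => norm_cast; ring

lemma ereal_coe_mul_sum {ι : Type*} {c : ℝ} (hc : 0 ≤ c) (s : Finset ι) (f : ι → EReal) :
    (c : EReal) * ∑ i ∈ s, f i = ∑ i ∈ s, (c : EReal) * f i := by
  induction s using Finset.cons_induction with
  | empty => simp
  | cons a s ha ih => rw [Finset.sum_cons, Finset.sum_cons, ereal_coe_mul_add hc, ih]

lemma ereal_sum_eq_bot {ι : Type*} [DecidableEq ι] {s : Finset ι} {f : ι → EReal} {a : ι}
    (ha : a ∈ s) (hfa : f a = ⊥) : ∑ i ∈ s, f i = ⊥ := by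
  rw [← Finset.add_sum_erase s f ha, hfa, EReal.bot_add]

section Combinatorics

variable {Y : Type*} [Fintype Y] [Inhabited Y]

lemma ofFn_cons {r : ℕ} (y : Y) (w : Fin r → Y) :
    List.ofFn (Fin.cons y w) = y :: List.ofFn w := by
  rw [List.ofFn_succ]; simp

lemma sum_fin_succ {M : Type*} [AddCommMonoid M] (r : ℕ) (φ : (Fin (r + 1) → Y) → M) :
    ∑ w : Fin (r + 1) → Y, φ w = ∑ y : Y, ∑ w : Fin r → Y, φ (Fin.cons y w) := by
  calc ∑ w : Fin (r + 1) → Y, φ w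
      = ∑ p : Y × (Fin r → Y), φ (Fin.cons p.1 p.2) :=
        (Fintype.sum_equiv (Fin.consEquiv fun _ => Y) _ _ fun p => rfl).symm
    _ = ∑ y : Y, ∑ w : Fin r → Y, φ (Fin.cons y w) :=
        Fintype.sum_prod_type (f := fun p => φ (Fin.cons p.1 p.2))

/-- Product of kernel probabilities along a path. -/
noncomputable def prodK (κ : List Y → Simplex Y) (pre ys : List Y) : ℝ :=
  ∏ s ∈ Finset.range ys.length, (κ (pre ++ ys.take s)).1 (ys.getD s default)

lemma prodK_nil (κ : List Y → Simplex Y) (pre : List Y) : prodK κ pre [] = 1 := by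
  simp [prodK]

lemma prodK_cons (κ : List Y → Simplex Y) (pre : List Y) (y : Y) (ys : List Y) :
    prodK κ pre (y :: ys) = (κ pre).1 y * prodK κ (pre ++ [y]) ys := by
  unfold prodK
  rw [List.length_cons, Finset.prod_range_succ', mul_comm]
  have h0 : (κ (pre ++ (y :: ys).take 0)).1 ((y :: ys).getD 0 default) = (κ pre).1 y := by simp
  rw [h0]
  congr 1
  refine Finset.prod_congr rfl fun s _ => ?_
  simp [List.append_assoc]

lemma prodK_nonneg (κ : List Y → Simplex Y) (pre ys : List Y) : 0 ≤ prodK κ pre ys :=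
  Finset.prod_nonneg fun s _ => (κ _).2.1 _

lemma prodK_le_one (κ : List Y → Simplex Y) (pre ys : List Y) : prodK κ pre ys ≤ 1 :=
  Finset.prod_le_one (fun s _ => (κ _).2.1 _) fun s _ => by
    have h := (κ (pre ++ ys.take s)).2
    calc (κ (pre ++ ys.take s)).1 (ys.getD s default)
        ≤ ∑ y, (κ (pre ++ ys.take s)).1 y :=
          Finset.single_le_sum (fun y _ => h.1 y) (Finset.mem_univ _)
      _ = 1 := h.2

lemma sum_prodK (κ : List Y → Simplex Y) :
    ∀ (r : ℕ) (pre : List Y), ∑ w : Fin r → Y, prodK κ pre (List.ofFn w) = 1 := by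
  intro r
  induction r with
  | zero => intro pre; simp [prodK]
  | succ r ih =>
    intro pre
    rw [sum_fin_succ]
    have : ∀ y : Y, ∑ w : Fin r → Y, prodK κ pre (List.ofFn (Fin.cons y w))
        = (κ pre).1 y := by
      intro y
      simp only [ofFn_cons, prodK_cons, ← Finset.mul_sum, ih (pre ++ [y]), mul_one]
    simp only [this, (κ pre).2.2]

end Combinatorics

section Main

variable {X Y : Type*} [Fintype Y] [Inhabited Y]

lemma expTree_eq_sum (π : List Y → Simplex Y) (g : List Y → EReal) :
    ∀ (r : ℕ) (pre : List Y),
      expTree π g r pre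
        = ∑ w : Fin r → Y, ((prodK π pre (List.ofFn w) : ℝ) : EReal) * g (pre ++ List.ofFn w) := by
  intro r
  induction r with
  | zero => intro pre; simp [expTree, prodK_nil]
  | succ r ih =>
    intro pre
    rw [show expTree π g (r + 1) pre
        = ∑ y : Y, ((π pre).1 y : EReal) * expTree π g r (pre ++ [y]) from rfl]
    rw [sum_fin_succ]
    refine Finset.sum_congr rfl fun y _ => ?_
    rw [ih (pre ++ [y]), ereal_coe_mul_sum ((π pre).2.1 y)]
    refine Finset.sum_congr rfl fun w _ => ?_
    rw [ofFn_cons, prodK_cons, EReal.coe_mul, mul_assoc]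
    congr 2
    simp [List.append_assoc]

variable (F : Set (Expert X Y))

lemma likelihood_nonneg (f : Expert X Y) (xs : List X) (ys : List Y) :
    0 ≤ likelihood f xs ys :=
  Finset.prod_nonneg fun t _ => (f _ _).2.1 _

lemma likelihood_le_one (f : Expert X Y) (xs : List X) (ys : List Y) :
    likelihood f xs ys ≤ 1 :=
  Finset.prod_le_one (fun t _ => (f _ _).2.1 _) fun t _ => by
    have h := (f (xs.take (t + 1)) (ys.take t)).2
    calc (f (xs.take (t + 1)) (ys.take t)).1 (ys.getD t default)
        ≤ ∑ y, (f (xs.take (t + 1)) (ys.take t)).1 y :=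
          Finset.single_le_sum (fun y _ => h.1 y) (Finset.mem_univ _)
      _ = 1 := h.2

/-- Maximum-likelihood value of the class on a path. -/
noncomputable def Mfull (χ : List Y → X) (ys : List Y) : ℝ :=
  ⨆ f : F, likelihood (f : Expert X Y) (treePath χ ys) ys

lemma Mfull_bddAbove (χ : List Y → X) (ys : List Y) :
    BddAbove (Set.range fun f : F => likelihood (f : Expert X Y) (treePath χ ys) ys) :=
  ⟨1, by rintro _ ⟨f, rfl⟩; exact likelihood_le_one _ _ _⟩

lemma le_Mfull {f : Expert X Y} (hf : f ∈ F) (χ : List Y → X) (ys : List Y) :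
    likelihood f (treePath χ ys) ys ≤ Mfull F χ ys :=
  le_ciSup (Mfull_bddAbove F χ ys) (⟨f, hf⟩ : F)

lemma Mfull_nonneg (hF : F.Nonempty) (χ : List Y → X) (ys : List Y) :
    0 ≤ Mfull F χ ys := by
  obtain ⟨f, hf⟩ := hF
  exact le_trans (likelihood_nonneg f _ _) (le_Mfull F hf χ ys)

lemma Mfull_le_one (hF : F.Nonempty) (χ : List Y → X) (ys : List Y) :
    Mfull F χ ys ≤ 1 := by
  have : Nonempty F := hF.to_subtype
  exact ciSup_le fun f => likelihood_le_one _ _ _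

/-- Partial Shtarkov sums. -/
noncomputable def msum (χ : List Y → X) (r : ℕ) (pre : List Y) : ℝ :=
  ∑ w : Fin r → Y, Mfull F χ (pre ++ List.ofFn w)

lemma msum_zero (χ : List Y → X) (pre : List Y) : msum F χ 0 pre = Mfull F χ pre := by
  simp [msum]

lemma msum_succ (χ : List Y → X) (r : ℕ) (pre : List Y) :
    msum F χ (r + 1) pre = ∑ y : Y, msum F χ r (pre ++ [y]) := by
  unfold msum
  rw [sum_fin_succ]
  refine Finset.sum_congr rfl fun y _ => Finset.sum_congr rfl fun w _ => ?_
  rw [ofFn_cons]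
  simp [List.append_assoc]

lemma msum_nonneg (hF : F.Nonempty) (χ : List Y → X) (r : ℕ) (pre : List Y) :
    0 ≤ msum F χ r pre :=
  Finset.sum_nonneg fun w _ => Mfull_nonneg F hF χ _

lemma msum_child_le (hF : F.Nonempty) (χ : List Y → X) (r : ℕ) (pre : List Y) (y : Y) :
    msum F χ r (pre ++ [y]) ≤ msum F χ (r + 1) pre := by
  rw [msum_succ]
  exact Finset.single_le_sum (fun z _ => msum_nonneg F hF χ r (pre ++ [z])) (Finset.mem_univ y)

/-- The kernel induced by an expert along a context tree. -/
noncomputable def expK (f : Expert X Y) (χ : List Y → X) : List Y → Simplex Y :=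
  fun pre => f ((List.range (pre.length + 1)).map fun t => χ (pre.take t)) pre

lemma likelihood_eq_prodK (f : Expert X Y) (χ : List Y → X) (ys : List Y) :
    likelihood f (treePath χ ys) ys = prodK (expK f χ) [] ys := by
  unfold likelihood prodK expK treePath
  refine Finset.prod_congr rfl fun t ht => ?_
  rw [Finset.mem_range] at ht
  have h1 : ((List.range ys.length).map fun s => χ (ys.take s)).take (t + 1)
      = (List.range (t + 1)).map fun s => χ (ys.take s) := by
    rw [← List.map_take, List.take_range, Nat.min_eq_left ht]
  have h2 : ((ys.take t).length + 1) = t + 1 := by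
    rw [List.length_take, Nat.min_eq_left ht.le]
  have h3 : ((List.range (t + 1)).map fun s => χ (ys.take s))
      = (List.range (t + 1)).map fun s => χ ((ys.take t).take s) := by
    refine List.map_congr_left fun s hs => ?_
    rw [List.mem_range] at hs
    rw [List.take_take, Nat.min_eq_left (Nat.lt_succ_iff.1 hs)]
  rw [List.nil_append, h1, h2, h3]

lemma cumLoss_eq_negLog (f : Expert X Y) (xs : List X) (ys : List Y) :
    cumLoss f xs ys = negLog (likelihood f xs ys) := by
  unfold cumLoss likelihood logloss
  rw [negLog_prod _ _ fun t _ => (f _ _).2.1 _]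

lemma iInf_cumLoss (hF : F.Nonempty) (χ : List Y → X) (ys : List Y) :
    (⨅ f : F, cumLoss (f : Expert X Y) (treePath χ ys) ys) = negLog (Mfull F χ ys) := by
  have : Nonempty F := hF.to_subtype
  simp only [cumLoss_eq_negLog]
  exact iInf_negLog _ (fun f => likelihood_nonneg _ _ _) fun f => likelihood_le_one _ _ _

lemma elog_of_pos {x : ℝ} (h : 0 < x) : elog x = ((Real.log x : ℝ) : EReal) := by
  simp [elog, not_le.2 h]

open Classical in
lemma gibbs {ι : Type*} [Fintype ι] (P M : ι → ℝ) {S : ℝ} (hS : 1 ≤ S)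
    (hP0 : ∀ i, 0 ≤ P i) (hP1 : ∑ i, P i = 1) (hM0 : ∀ i, 0 ≤ M i) (hMS : ∑ i, M i ≤ S)
    (hgood : ∀ i, 0 < P i → 0 < M i) :
    ∑ i, (if 0 < P i then P i * (Real.log (M i) - Real.log (P i)) else 0) ≤ Real.log S := by
  have hS0 : 0 < S := lt_of_lt_of_le one_pos hS
  set G := Finset.univ.filter fun i => 0 < P i with hG
  have hsum : ∑ i, (if 0 < P i then P i * (Real.log (M i) - Real.log (P i)) else 0)
      = ∑ i ∈ G, P i * (Real.log (M i) - Real.log (P i)) := by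
    rw [hG, Finset.sum_filter]
  have hPG : ∑ i ∈ G, P i = 1 := by
    rw [hG, Finset.sum_filter_of_ne, hP1]
    intro i _ hne
    exact lt_of_le_of_ne (hP0 i) (Ne.symm hne)
  have hMG : ∑ i ∈ G, M i ≤ S :=
    le_trans (Finset.sum_le_sum_of_subset_of_nonneg (Finset.subset_univ G)
      fun i _ _ => hM0 i) hMS
  have hbound : ∀ i ∈ G, P i * (Real.log (M i) - Real.log (P i))
      ≤ M i / S - P i + P i * Real.log S := by
    intro i hi
    rw [hG, Finset.mem_filter] at hi
    have hPi : 0 < P i := hi.2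
    have hMi : 0 < M i := hgood i hPi
    have h1 : Real.log (M i / (P i * S)) ≤ M i / (P i * S) - 1 :=
      Real.log_le_sub_one_of_pos (div_pos hMi (mul_pos hPi hS0))
    have h2 : Real.log (M i / (P i * S))
        = Real.log (M i) - Real.log (P i) - Real.log S := by
      rw [Real.log_div hMi.ne' (mul_pos hPi hS0).ne', Real.log_mul hPi.ne' hS0.ne']
      ring
    have h3 : Real.log (M i) - Real.log (P i) ≤ M i / (P i * S) - 1 + Real.log S := by
      rw [h2] at h1; linarith
    calc P i * (Real.log (M i) - Real.log (P i))
        ≤ P i * (M i / (P i * S) - 1 + Real.log S) := by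
          exact mul_le_mul_of_nonneg_left h3 hPi.le
      _ = M i / S - P i + P i * Real.log S := by
          field_simp
  calc ∑ i, (if 0 < P i then P i * (Real.log (M i) - Real.log (P i)) else 0)
      = ∑ i ∈ G, P i * (Real.log (M i) - Real.log (P i)) := hsum
    _ ≤ ∑ i ∈ G, (M i / S - P i + P i * Real.log S) := Finset.sum_le_sum hbound
    _ = (∑ i ∈ G, M i) / S - (∑ i ∈ G, P i) + (∑ i ∈ G, P i) * Real.log S := by
        rw [Finset.sum_add_distrib, Finset.sum_sub_distrib, Finset.sum_div, ← Finset.sum_mul]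
    _ ≤ Real.log S := by
        rw [hPG]
        have : (∑ i ∈ G, M i) / S ≤ 1 := (div_le_one hS0).2 hMG
        linarith

lemma take_succ_getD {α : Type*} [Inhabited α] {ys : List α} {t : ℕ} (h : t < ys.length) :
    ys.take (t + 1) = ys.take t ++ [ys.getD t default] := by
  rw [List.take_succ, List.getD_eq_getElem _ _ h, List.getElem?_eq_getElem h]
  rfl

lemma sum_likelihood (f : Expert X Y) (χ : List Y → X) (T : ℕ) :
    ∑ w : Fin T → Y, likelihood f (treePath χ (List.ofFn w)) (List.ofFn w) = 1 := by
  calc ∑ w : Fin T → Y, likelihood f (treePath χ (List.ofFn w)) (List.ofFn w)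
      = ∑ w : Fin T → Y, prodK (expK f χ) [] (List.ofFn w) :=
        Finset.sum_congr rfl fun w _ => likelihood_eq_prodK f χ _
    _ = 1 := sum_prodK (expK f χ) T []

lemma one_le_msum (hF : F.Nonempty) (χ : List Y → X) (T : ℕ) :
    1 ≤ msum F χ T [] := by
  obtain ⟨f, hf⟩ := hF
  have hm : msum F χ T [] = ∑ w : Fin T → Y, Mfull F χ (List.ofFn w) := by
    unfold msum
    exact Finset.sum_congr rfl fun w _ => by rw [List.nil_append]
  rw [hm, ← sum_likelihood f χ T]
  exact Finset.sum_le_sum fun w _ => le_Mfull F hf χ (List.ofFn w)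

open Classical in
/-- The normalized maximum likelihood probabilistic tree. -/
noncomputable def nml (hF : F.Nonempty) (χ : List Y → X) (T : ℕ) (pre : List Y) :
    Simplex Y :=
  if h : pre.length < T ∧ 0 < msum F χ (T - pre.length) pre then
    ⟨fun y => msum F χ (T - (pre.length + 1)) (pre ++ [y]) / msum F χ (T - pre.length) pre,
      fun y => div_nonneg (msum_nonneg F hF χ _ _) h.2.le, by
        rw [← Finset.sum_div]
        have he : T - pre.length = (T - (pre.length + 1)) + 1 := by omega
        rw [show (∑ y, msum F χ (T - (pre.length + 1)) (pre ++ [y]))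
            = msum F χ (T - pre.length) pre from by rw [he, msum_succ]]
        exact div_self h.2.ne'⟩
  else
    ⟨fun _ => (Fintype.card Y : ℝ)⁻¹,
      fun y => by positivity,
      by
        rw [Finset.sum_const, Finset.card_univ, nsmul_eq_mul]
        exact mul_inv_cancel₀ (Nat.cast_ne_zero.2 Fintype.card_ne_zero)⟩

lemma nml_apply_pos (hF : F.Nonempty) (χ : List Y → X) {T : ℕ} {pre : List Y}
    (h1 : pre.length < T) (h2 : 0 < msum F χ (T - pre.length) pre) (y : Y) :
    (nml F hF χ T pre).1 y
      = msum F χ (T - (pre.length + 1)) (pre ++ [y]) / msum F χ (T - pre.length) pre := by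
  rw [nml, dif_pos ⟨h1, h2⟩]

lemma nml_telescope (hF : F.Nonempty) (χ : List Y → X) {T : ℕ} {ys : List Y}
    (hlen : ys.length = T) :
    ∀ t, t ≤ T →
      (∏ s ∈ Finset.range t, (nml F hF χ T (ys.take s)).1 (ys.getD s default))
          * msum F χ T []
        = msum F χ (T - t) (ys.take t) := by
  intro t
  induction t with
  | zero => intro _; simp
  | succ t ih =>
    intro ht
    have ht' : t < T := ht
    have hlt : t < ys.length := by omega
    have htk : (ys.take t).length = t := by
      rw [List.length_take]; omega
    rw [Finset.prod_range_succ, mul_comm _ ((nml F hF χ T (ys.take t)).1 (ys.getD t default)),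
      mul_assoc, ih ht'.le]
    rcases eq_or_lt_of_le (msum_nonneg F hF χ (T - t) (ys.take t)) with hz | hpos
    · have hzero : msum F χ (T - (t + 1)) (ys.take (t + 1)) = 0 := by
        have hle : msum F χ (T - (t + 1)) (ys.take t ++ [ys.getD t default])
            ≤ msum F χ (T - (t + 1) + 1) (ys.take t) :=
          msum_child_le F hF χ _ _ _
        rw [show T - (t + 1) + 1 = T - t from by omega] at hle
        rw [take_succ_getD hlt]
        exact le_antisymm (le_trans hle (le_of_eq hz.symm)) (msum_nonneg F hF χ _ _)
      rw [hzero, ← hz, mul_zero]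
    · rw [nml_apply_pos F hF χ (by omega : (ys.take t).length < T) (by rw [htk]; exact hpos)]
      rw [htk, take_succ_getD hlt]
      field_simp

lemma prodK_nml_eq (hF : F.Nonempty) (χ : List Y → X) {T : ℕ} {ys : List Y}
    (hlen : ys.length = T) :
    prodK (nml F hF χ T) [] ys * msum F χ T [] = Mfull F χ ys := by
  have h := nml_telescope F hF χ hlen T le_rfl
  rw [show ys.take T = ys from by rw [← hlen, List.take_length], Nat.sub_self, msum_zero] at h
  rw [← h]
  congr 1
  unfold prodK
  rw [hlen]
  exact Finset.prod_congr rfl fun s _ => by rw [List.nil_append]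

lemma msum_nil_eq (χ : List Y → X) (T : ℕ) :
    msum F χ T [] = ∑ w : Fin T → Y, Mfull F χ (List.ofFn w) := by
  unfold msum
  exact Finset.sum_congr rfl fun w _ => by rw [List.nil_append]

/-- The payoff function appearing in the dual value. -/
noncomputable def payoff (χ : List Y → X) (π : List Y → Simplex Y) (T : ℕ)
    (suf : List Y) : EReal :=
  (∑ s ∈ Finset.range T, logloss (π (suf.take s)) (suf.getD s default)) -
    ⨅ f : F, cumLoss (f : Expert X Y) (treePath χ suf) suf

lemma payoff_eq (hF : F.Nonempty) (χ : List Y → X) (π : List Y → Simplex Y) (T : ℕ)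
    (w : Fin T → Y) :
    payoff F χ π T (List.ofFn w)
      = negLog (prodK π [] (List.ofFn w)) - negLog (Mfull F χ (List.ofFn w)) := by
  unfold payoff
  rw [iInf_cumLoss F hF χ]
  congr 1
  unfold prodK
  rw [negLog_prod _ _ fun s _ => (π _).2.1 _, List.length_ofFn]
  exact Finset.sum_congr rfl fun s _ => by rw [List.nil_append]; rfl

lemma expTree_le (hF : F.Nonempty) (χ : List Y → X) (π : List Y → Simplex Y) (T : ℕ) :
    expTree π (payoff F χ π T) T [] ≤ elog (msum F χ T []) := by
  classical
  have hS1 : 1 ≤ msum F χ T [] := one_le_msum F hF χ T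
  have hS0 : (0 : ℝ) < msum F χ T [] := lt_of_lt_of_le one_pos hS1
  rw [expTree_eq_sum]
  set P := fun w : Fin T → Y => prodK π [] (List.ofFn w) with hPdef
  set M := fun w : Fin T → Y => Mfull F χ (List.ofFn w) with hMdef
  have hrw : ∀ w : Fin T → Y,
      ((P w : ℝ) : EReal) * payoff F χ π T ([] ++ List.ofFn w)
        = ((P w : ℝ) : EReal) * (negLog (P w) - negLog (M w)) := by
    intro w; rw [List.nil_append, payoff_eq F hF χ π T w]
  by_cases hbad : ∃ w, 0 < P w ∧ M w ≤ 0
  · obtain ⟨w, hp, hm⟩ := hbad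
    have hb : ((P w : ℝ) : EReal) * payoff F χ π T ([] ++ List.ofFn w) = ⊥ := by
      rw [hrw w, negLog_of_pos hp, negLog_of_nonpos hm, EReal.sub_top,
        EReal.coe_mul_bot_of_pos hp]
    rw [ereal_sum_eq_bot (Finset.mem_univ w) hb]
    exact bot_le
  · push_neg at hbad
    have hgood : ∀ w, 0 < P w → 0 < M w := hbad
    have hterm : ∀ w, ((P w : ℝ) : EReal) * payoff F χ π T ([] ++ List.ofFn w)
        = (((if 0 < P w then P w * (Real.log (M w) - Real.log (P w)) else 0) : ℝ) : EReal) := by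
      intro w
      rw [hrw w]
      rcases lt_or_ge 0 (P w) with hp | hp
      · have hm : 0 < M w := hgood w hp
        rw [if_pos hp, negLog_of_pos hp, negLog_of_pos hm, ← EReal.coe_sub, ← EReal.coe_mul]
        norm_cast
        ring
      · have hp0 : P w = 0 := le_antisymm hp (prodK_nonneg π [] _)
        rw [if_neg (not_lt.2 hp), hp0, EReal.coe_zero, EReal.zero_mul]
    rw [Finset.sum_congr rfl fun w _ => hterm w, ← ereal_coe_sum, elog_of_pos hS0]
    exact EReal.coe_le_coe_iff.2 (gibbs P M hS1 (fun w => prodK_nonneg π [] _)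
      (sum_prodK π T []) (fun w => Mfull_nonneg F hF χ _)
      (le_of_eq (msum_nil_eq F χ T).symm) hgood)

lemma expTree_nml (hF : F.Nonempty) (χ : List Y → X) (T : ℕ) :
    expTree (nml F hF χ T) (payoff F χ (nml F hF χ T) T) T [] = elog (msum F χ T []) := by
  classical
  have hS1 : 1 ≤ msum F χ T [] := one_le_msum F hF χ T
  have hS0 : (0 : ℝ) < msum F χ T [] := lt_of_lt_of_le one_pos hS1
  set S := msum F χ T [] with hSdef
  rw [expTree_eq_sum]
  set M := fun w : Fin T → Y => Mfull F χ (List.ofFn w) with hMdef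
  have hP : ∀ w : Fin T → Y, prodK (nml F hF χ T) [] (List.ofFn w) = M w / S := by
    intro w
    have h := prodK_nml_eq F hF χ (ys := List.ofFn w) List.length_ofFn
    rw [eq_div_iff hS0.ne']
    exact h
  have hterm : ∀ w : Fin T → Y,
      ((prodK (nml F hF χ T) [] (List.ofFn w) : ℝ) : EReal)
          * payoff F χ (nml F hF χ T) T ([] ++ List.ofFn w)
        = (((if 0 < M w then (M w / S) * Real.log S else 0) : ℝ) : EReal) := by
    intro w
    rw [List.nil_append, payoff_eq F hF χ (nml F hF χ T) T w, hP w]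
    rcases lt_or_ge 0 (M w) with hm | hm
    · have hpw : 0 < M w / S := div_pos hm hS0
      rw [if_pos hm, negLog_of_pos hpw, negLog_of_pos hm, ← EReal.coe_sub, ← EReal.coe_mul]
      norm_cast
      rw [Real.log_div hm.ne' hS0.ne']
      ring
    · have hm0 : M w = 0 := le_antisymm hm (Mfull_nonneg F hF χ _)
      rw [if_neg (not_lt.2 hm), hm0, zero_div, EReal.coe_zero, EReal.zero_mul]
  rw [Finset.sum_congr rfl fun w _ => hterm w, ← ereal_coe_sum, elog_of_pos hS0]
  congr 1
  have hMG : ∑ w ∈ Finset.univ.filter (fun w : Fin T → Y => 0 < M w), M w = S := by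
    rw [Finset.sum_filter_of_ne fun w _ hne =>
      lt_of_le_of_ne (Mfull_nonneg F hF χ _) (Ne.symm hne)]
    exact (msum_nil_eq F χ T).symm
  calc ∑ w : Fin T → Y, (if 0 < M w then (M w / S) * Real.log S else 0)
      = ∑ w ∈ Finset.univ.filter (fun w : Fin T → Y => 0 < M w), (M w / S) * Real.log S := by
        rw [Finset.sum_filter]
    _ = ((∑ w ∈ Finset.univ.filter (fun w : Fin T → Y => 0 < M w), M w) / S) * Real.log S := by
        rw [Finset.sum_div, Finset.sum_mul]
    _ = Real.log S := by rw [hMG, div_self hS0.ne', one_mul]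

lemma shtarkov_eq_msum (χ : List Y → X) (T : ℕ) :
    shtarkov F T χ = msum F χ T [] := by
  unfold shtarkov shtarkovPrefix
  rw [msum_nil_eq]
  refine Finset.sum_congr rfl fun w _ => ?_
  unfold Mfull
  simp only [List.nil_append]

end Main

/-- For every nonempty class `F` of sequential experts and horizon `T ≥ 1`,
the dual value equals the worst-case log contextual Shtarkov sum:
`V_T(F) = sup_χ log S_T(F | χ)` (equality in the extended reals). -/
theorem dualValue_eq_sup_log_shtarkov
    {X Y : Type*} [Fintype Y] [Inhabited Y] [Nonempty X]
    (F : Set (Expert X Y)) (hF : F.Nonempty) (T : ℕ) (hT : 1 ≤ T) :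
    dualValue F T = ⨆ χ : List Y → X, elog (shtarkov F T χ) := by
  have hdual : dualValue F T = ⨆ χ : List Y → X, ⨆ π : List Y → Simplex Y,
      expTree π (payoff F χ π T) T [] := by
    unfold dualValue dualValToGo payoff
    simp only [List.nil_append]
  rw [hdual]
  apply le_antisymm
  · refine iSup_le fun χ => iSup_le fun π => ?_
    refine le_trans (expTree_le F hF χ π T) ?_
    rw [← shtarkov_eq_msum F χ T]
    exact le_iSup (fun χ => elog (shtarkov F T χ)) χ
  · refine iSup_le fun χ => ?_
    rw [shtarkov_eq_msum F χ T, ← expTree_nml F hF χ T]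
    exact le_iSup_of_le χ (le_iSup_of_le (nml F hF χ T) le_rfl)
end

section
/- For every nonempty class F of sequential experts, every horizon T ≥ 1, and every δ ∈ (0, 1/2), the minimax regret satisfies R_T(F) ≤ R_T(F^δ) + T·log(1 + |Y|δ). -/
open scoped BigOperators

/-- The smooth truncation `T_δ(p)(y) = (p(y) + δ)/(1 + |Y|δ)`. -/
noncomputable def truncate {Y : Type*} [Fintype Y] (δ : ℝ) (hδ : 0 ≤ δ)
    (p : Simplex Y) : Simplex Y :=
  ⟨fun y => (p.1 y + δ) / (1 + (Fintype.card Y : ℝ) * δ), by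
    have hpos : (0 : ℝ) < 1 + (Fintype.card Y : ℝ) * δ := by positivity
    constructor
    · intro y
      exact div_nonneg (add_nonneg (p.2.1 y) hδ) hpos.le
    · rw [← Finset.sum_div, Finset.sum_add_distrib, p.2.2, Finset.sum_const,
        Finset.card_univ, nsmul_eq_mul]
      exact div_self hpos.ne'⟩

/-- The smooth truncated expert `f^δ = T_δ ∘ f`. -/
noncomputable def truncateExpert {X Y : Type*} [Fintype Y] (δ : ℝ) (hδ : 0 ≤ δ)
    (f : Expert X Y) : Expert X Y :=
  fun xs ys => truncate δ hδ (f xs ys)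


section TruncAux

variable {X Y : Type*} [Fintype Y] [Inhabited Y]

private lemma ereal_le_add_coe_iff (c : ℝ) {x y : EReal} :
    x ≤ y + (c : EReal) ↔ x - (c : EReal) ≤ y :=
  (EReal.sub_le_iff_le_add (Or.inl (EReal.coe_ne_bot c))
    (Or.inl (EReal.coe_ne_top c))).symm

private lemma logloss_truncate_le (δ : ℝ) (hδ : 0 < δ) (p : Simplex Y) (y : Y) :
    logloss (truncate δ hδ.le p) y
      ≤ logloss p y + ((Real.log (1 + (Fintype.card Y : ℝ) * δ) : ℝ) : EReal) := by
  have hc : (0 : ℝ) < 1 + (Fintype.card Y : ℝ) * δ := by positivity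
  have hnum : 0 < p.1 y + δ := lt_of_lt_of_le hδ (by linarith [p.2.1 y])
  have hq : 0 < (p.1 y + δ) / (1 + (Fintype.card Y : ℝ) * δ) := div_pos hnum hc
  show negLog ((p.1 y + δ) / (1 + (Fintype.card Y : ℝ) * δ)) ≤ _
  rw [negLog, if_neg (not_le.mpr hq)]
  rcases le_or_gt (p.1 y) 0 with h0 | h0
  · rw [logloss, negLog, if_pos h0]
    simp
  · rw [logloss, negLog, if_neg (not_le.mpr h0), ← EReal.coe_add, EReal.coe_le_coe_iff]
    rw [Real.log_div hnum.ne' hc.ne']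
    have := Real.log_le_log h0 (by linarith : p.1 y ≤ p.1 y + δ)
    linarith

private lemma cumLoss_truncate_le (δ : ℝ) (hδ : 0 < δ) (f : Expert X Y)
    (xs : List X) (ys : List Y) :
    cumLoss (truncateExpert δ hδ.le f) xs ys
      ≤ cumLoss f xs ys +
        (((ys.length : ℝ) * Real.log (1 + (Fintype.card Y : ℝ) * δ) : ℝ) : EReal) := by
  set L : ℝ := Real.log (1 + (Fintype.card Y : ℝ) * δ) with hL
  calc cumLoss (truncateExpert δ hδ.le f) xs ys
      ≤ ∑ t ∈ Finset.range ys.length,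
          (logloss (f (xs.take (t + 1)) (ys.take t)) (ys.getD t default) + (L : EReal)) :=
        Finset.sum_le_sum fun t _ => logloss_truncate_le δ hδ _ _
    _ = cumLoss f xs ys + (((ys.length : ℝ) * L : ℝ) : EReal) := by
        rw [Finset.sum_add_distrib, cumLoss, Finset.sum_const, Finset.card_range,
          ← EReal.coe_nsmul, nsmul_eq_mul]

private lemma iInf_truncate_le (δ : ℝ) (hδ : 0 < δ) (F : Set (Expert X Y))
    (xs : List X) (ys : List Y) :
    (⨅ g : (truncateExpert δ hδ.le '' F), cumLoss (g : Expert X Y) xs ys)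
      ≤ (⨅ f : F, cumLoss (f : Expert X Y) xs ys) +
        (((ys.length : ℝ) * Real.log (1 + (Fintype.card Y : ℝ) * δ) : ℝ) : EReal) := by
  rw [ereal_le_add_coe_iff]
  refine le_iInf fun f => ?_
  rw [EReal.sub_le_iff_le_add (Or.inl (EReal.coe_ne_bot _)) (Or.inl (EReal.coe_ne_top _))]
  refine le_trans (iInf_le _ (⟨truncateExpert δ hδ.le f.1, Set.mem_image_of_mem _ f.2⟩ :
    (truncateExpert δ hδ.le '' F))) ?_
  exact cumLoss_truncate_le δ hδ f.1 xs ys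

private lemma valToGo_truncate_le (δ : ℝ) (hδ : 0 < δ) (F : Set (Expert X Y)) :
    ∀ (r : ℕ) (xs : List X) (ys : List Y) (acc : EReal),
      valToGo F r xs ys acc ≤
        valToGo (truncateExpert δ hδ.le '' F) r xs ys acc +
          ((((ys.length + r : ℕ) : ℝ) *
            Real.log (1 + (Fintype.card Y : ℝ) * δ) : ℝ) : EReal)
  | 0, xs, ys, acc => by
      simp only [valToGo, Nat.add_zero]
      set L : ℝ := Real.log (1 + (Fintype.card Y : ℝ) * δ) with hLdef
      set c : ℝ := (ys.length : ℝ) * L with hc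
      have h := iInf_truncate_le (X := X) (Y := Y) δ hδ F xs ys
      have h1 : (⨅ g : (truncateExpert δ hδ.le '' F), cumLoss (g : Expert X Y) xs ys)
          - (c : EReal) ≤ ⨅ f : F, cumLoss (f : Expert X Y) xs ys :=
        EReal.sub_le_of_le_add h
      have h2 : -(⨅ f : F, cumLoss (f : Expert X Y) xs ys)
          ≤ -(⨅ g : (truncateExpert δ hδ.le '' F), cumLoss (g : Expert X Y) xs ys)
            + (c : EReal) := by
        have := EReal.neg_le_neg_iff.mpr h1
        rwa [EReal.neg_sub (Or.inr (EReal.coe_ne_bot c)) (Or.inr (EReal.coe_ne_top c))]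
          at this
      calc acc - ⨅ f : F, cumLoss (f : Expert X Y) xs ys
          = acc + -(⨅ f : F, cumLoss (f : Expert X Y) xs ys) := sub_eq_add_neg _ _
        _ ≤ acc + (-(⨅ g : (truncateExpert δ hδ.le '' F), cumLoss (g : Expert X Y) xs ys)
              + (c : EReal)) := add_le_add_right h2 acc
        _ = (acc - ⨅ g : (truncateExpert δ hδ.le '' F), cumLoss (g : Expert X Y) xs ys)
              + (c : EReal) := by rw [← add_assoc, sub_eq_add_neg]
  | r + 1, xs, ys, acc => by
      simp only [valToGo]
      refine iSup_le fun x => ?_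
      refine le_trans ?_ (add_le_add_left (le_iSup (fun x => ⨅ p : Simplex Y, ⨆ y : Y,
        valToGo (truncateExpert δ hδ.le '' F) r (xs ++ [x]) (ys ++ [y])
          (acc + logloss p y)) x) _)
      rw [ereal_le_add_coe_iff]
      refine le_iInf fun p => ?_
      rw [EReal.sub_le_iff_le_add (Or.inl (EReal.coe_ne_bot _)) (Or.inl (EReal.coe_ne_top _))]
      refine le_trans (iInf_le _ p) ?_
      refine iSup_le fun y => ?_
      have hIH := valToGo_truncate_le δ hδ F r (xs ++ [x]) (ys ++ [y]) (acc + logloss p y)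
      have hn : (ys ++ [y]).length + r = ys.length + (r + 1) := by
        simp only [List.length_append, List.length_singleton]; omega
      rw [hn] at hIH
      exact hIH.trans (add_le_add_left (le_iSup (fun y =>
        valToGo (truncateExpert δ hδ.le '' F) r (xs ++ [x]) (ys ++ [y])
          (acc + logloss p y)) y) _)

end TruncAux

/-- For every nonempty class `F` of sequential experts, every horizon
`T ≥ 1` and every `δ ∈ (0, 1/2)`, the minimax regret satisfies
`R_T(F) ≤ R_T(F^δ) + T·log(1 + |Y|δ)`, where `F^δ = {T_δ ∘ f : f ∈ F}`. -/
theorem minimaxRegret_le_truncated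
    {X Y : Type*} [Fintype Y] [Inhabited Y] [Nonempty X]
    (F : Set (Expert X Y)) (hF : F.Nonempty) (T : ℕ) (hT : 1 ≤ T)
    (δ : ℝ) (hδ0 : 0 < δ) (hδ1 : δ < 1 / 2) :
    minimaxRegret F T ≤
      minimaxRegret (truncateExpert δ hδ0.le '' F) T +
        (((T : ℝ) * Real.log (1 + (Fintype.card Y : ℝ) * δ) : ℝ) : EReal) := by
  have h := valToGo_truncate_le (X := X) (Y := Y) δ hδ0 F T [] [] 0
  simpa [minimaxRegret] using h
end
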